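/- arXiv:2507.15448 — 10 statements merged into one kernel-verified Lean document; each statement's English description precedes it below -/
import Mathlib

section
/- Let Φ be an n×m matrix over F whose columns span F^n (i.e., Φ : F^m → F^n is surjective). Then the kernel of the ℓ-Galois Gramian Φ^{†_ℓ}Φ : F^m → F^m equals the kernel of Φ : F^m → F^n. -/
open Matrix BigOperators

/-- If the columns of `Φ` form a frame for `F^n` (i.e. `Φ.mulVec` is surjective), then
the kernel of the ℓ-Galois Gramian `Φ^{†_ℓ}Φ` equals the kernel of `Φ`. -/
theorem gramian_ker (p e ℓ n m : ℕ) (hp : p.Prime) (he : 1 ≤ e) (hℓ : ℓ ≤ e - 1)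
    (F : Type) [Field F] [Fintype F] (hcard : Fintype.card F = p ^ e)
    (Φ : Matrix (Fin n) (Fin m) F) (hsurj : Function.Surjective Φ.mulVec) :
    ∀ x : Fin m → F, ((Φ.map fun c => c ^ p ^ ℓ)ᵀ * Φ).mulVec x = 0 ↔ Φ.mulVec x = 0 := by
  -- First, establish `CharP F p`.
  have hq : (ringChar F).Prime := CharP.char_is_prime F (ringChar F)
  have hchar : CharP F p := by
    obtain ⟨k, hk, hcard'⟩ := FiniteField.card F (ringChar F)
    have hpq : p = ringChar F := by
      have hd : p ∣ ringChar F ^ (k : ℕ) := by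
        rw [← hcard', hcard]
        exact dvd_pow_self p (by omega)
      exact (Nat.prime_dvd_prime_iff_eq hp hq).mp (hp.dvd_of_dvd_pow hd)
    rw [hpq]
    infer_instance
  haveI := hchar
  haveI : Fact p.Prime := ⟨hp⟩
  haveI : ExpChar F p := ExpChar.prime hp
  intro x
  constructor
  · intro h
    set v := Φ.mulVec x with hv
    rw [← Matrix.mulVec_mulVec] at h
    -- each entry j : ∑ k, σ(Φ k j) * v k = 0
    have hentry : ∀ j : Fin m, ∑ k : Fin n, (Φ k j) ^ p ^ ℓ * v k = 0 := by
      intro j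
      have := congrFun h j
      simpa [hv, Matrix.mulVec, dotProduct, Matrix.transpose_apply, Matrix.map_apply]
        using this
    -- show v = 0
    funext i
    obtain ⟨z, hz⟩ := hsurj (Pi.single i 1)
    have key : ∑ k : Fin n, ((Φ.mulVec z) k) ^ p ^ ℓ * v k = 0 := by
      have expand : ∀ k : Fin n, ((Φ.mulVec z) k) ^ p ^ ℓ
          = ∑ j : Fin m, (Φ k j) ^ p ^ ℓ * (z j) ^ p ^ ℓ := by
        intro k
        rw [Matrix.mulVec, dotProduct, sum_pow_char_pow]
        exact Finset.sum_congr rfl fun j _ => mul_pow _ _ _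
      calc ∑ k : Fin n, ((Φ.mulVec z) k) ^ p ^ ℓ * v k
          = ∑ k : Fin n, ∑ j : Fin m, (Φ k j) ^ p ^ ℓ * (z j) ^ p ^ ℓ * v k := by
            refine Finset.sum_congr rfl fun k _ => ?_
            rw [expand k, Finset.sum_mul]
        _ = ∑ j : Fin m, (z j) ^ p ^ ℓ * ∑ k : Fin n, (Φ k j) ^ p ^ ℓ * v k := by
            rw [Finset.sum_comm]
            refine Finset.sum_congr rfl fun j _ => ?_
            rw [Finset.mul_sum]
            refine Finset.sum_congr rfl fun k _ => ?_
            ring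
        _ = 0 := by simp [hentry]
    rw [hz] at key
    have hpne : p ^ ℓ ≠ 0 := pow_ne_zero ℓ hp.ne_zero
    have : v i = 0 := by
      have : ∑ k : Fin n, ((Pi.single i 1 : Fin n → F) k) ^ p ^ ℓ * v k = v i := by
        rw [Finset.sum_eq_single i]
        · simp
        · intro b _ hb
          simp [Pi.single_apply, hb, zero_pow hpne]
        · intro hi; exact absurd (Finset.mem_univ i) hi
      rw [this] at key
      exact key
    simpa using this
  · intro h
    rw [← Matrix.mulVec_mulVec, h, Matrix.mulVec_zero]
end

section
/- Let Φ be an n×m matrix over F and c ∈ F. If Φ·Φ^{†_ℓ} = c·I (so the columns of Φ form an ℓ-Galois c-tight frame for F^n), then Φ·Φ^{†_{e−ℓ}} = c^{p^{e−ℓ}}·I, where Φ^{†_{e−ℓ}} = σ_{e−ℓ}(Φ)^t with σ_{e−ℓ}(x) = x^{p^{e−ℓ}}; that is, the columns of Φ form an (e−ℓ)-Galois c^{p^{e−ℓ}}-tight frame. -/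
open Matrix BigOperators

/-- If the columns of `Φ` form an ℓ-Galois `c`-tight frame, i.e. `Φ·σ_ℓ(Φ)ᵀ = c·I`,
then they form an `(e−ℓ)`-Galois `c^(p^(e−ℓ))`-tight frame:
`Φ·σ_{e−ℓ}(Φ)ᵀ = c^(p^(e−ℓ))·I`. -/
theorem tight_frame_conj (p e ℓ n m : ℕ) (hp : p.Prime) (he : 1 ≤ e) (hℓ : ℓ ≤ e - 1)
    (F : Type) [Field F] [Fintype F] (hcard : Fintype.card F = p ^ e)
    (Φ : Matrix (Fin n) (Fin m) F) (c : F)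
    (htight : Φ * (Φ.map fun x => x ^ p ^ ℓ)ᵀ = c • (1 : Matrix (Fin n) (Fin n) F)) :
    Φ * (Φ.map fun x => x ^ p ^ (e - ℓ))ᵀ =
      c ^ p ^ (e - ℓ) • (1 : Matrix (Fin n) (Fin n) F) := by
  haveI : Fact p.Prime := ⟨hp⟩
  have hchar : ringChar F = p := by
    have h1 : ringChar F ∣ p ^ e := ringChar.dvd (by
      rw [← hcard]; exact FiniteField.cast_card_eq_zero F)
    have h2 := CharP.char_is_prime F (ringChar F)
    exact (Nat.prime_dvd_prime_iff_eq h2 hp).mp (h2.dvd_of_dvd_pow h1)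
  haveI : CharP F p := hchar ▸ ringChar.charP F
  set k := e - ℓ with hk
  set f : F →+* F := iterateFrobenius F p k with hf
  have hfval : ∀ x : F, f x = x ^ p ^ k := fun x => iterateFrobenius_def p k x
  have hmap := congrArg (fun M : Matrix (Fin n) (Fin n) F => M.map f) htight
  simp only [Matrix.map_mul] at hmap
  have h1 : ((Φ.map fun x => x ^ p ^ ℓ)ᵀ).map f = Φᵀ := by
    ext i j
    simp only [Matrix.map_apply, Matrix.transpose_apply, hfval]
    rw [← pow_mul, ← pow_add]
    have : ℓ + k = e := by omega
    rw [this, ← hcard, FiniteField.pow_card]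
  have h2 : (c • (1 : Matrix (Fin n) (Fin n) F)).map f
      = (c ^ p ^ k) • (1 : Matrix (Fin n) (Fin n) F) := by
    ext i j
    simp only [Matrix.map_apply, Matrix.smul_apply, Matrix.one_apply, smul_eq_mul]
    by_cases h : i = j
    · simp [h, hfval]
    · simp [h, map_zero]
  rw [h1, h2] at hmap
  have hΦf : Φ.map ⇑f = Φ.map fun x => x ^ p ^ k := by
    ext i j; simp [hfval]
  have := congrArg Matrix.transpose hmap
  simpa [Matrix.transpose_mul, Matrix.transpose_map, Matrix.transpose_smul, hΦf] using this
end

section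
/- Let Φ be an n×m matrix over F whose columns span F^n (i.e., Φ : F^m → F^n is surjective), and let c ∈ F. If the ℓ-Galois Gram matrix G = Φ^{†_ℓ}Φ satisfies G² = c·G, then for every x, y ∈ F^n one has (Φ^{†_{e−ℓ}}x, Φ^{†_ℓ}y)_ℓ = c·(x,y)_ℓ, where Φ^{†_{e−ℓ}} = σ_{e−ℓ}(Φ)^t with σ_{e−ℓ}(x) = x^{p^{e−ℓ}}. -/
open Matrix BigOperators

/-- If the columns of `Φ` span `F^n` and the ℓ-Galois Gram matrix `G = σ_ℓ(Φ)ᵀ·Φ`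
satisfies `G² = c·G`, then `(Φ^{†_{e−ℓ}}x, Φ^{†_ℓ}y)_ℓ = c·(x,y)_ℓ` for all `x, y`,
where `(u,w)_ℓ = ∑ i, u_i^(p^ℓ)·w_i` and `Φ^{†_k} = σ_k(Φ)ᵀ`. -/
theorem gram_sq_implies_form (p e ℓ n m : ℕ) (hp : p.Prime) (he : 1 ≤ e) (hℓ : ℓ ≤ e - 1)
    (F : Type) [Field F] [Fintype F] (hcard : Fintype.card F = p ^ e)
    (Φ : Matrix (Fin n) (Fin m) F) (c : F)
    (hsurj : Function.Surjective Φ.mulVec)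
    (hG : ((Φ.map fun x => x ^ p ^ ℓ)ᵀ * Φ) ^ 2 = c • ((Φ.map fun x => x ^ p ^ ℓ)ᵀ * Φ)) :
    ∀ x y : Fin n → F,
      (∑ i, ((Φ.map fun z => z ^ p ^ (e - ℓ))ᵀ.mulVec x i) ^ p ^ ℓ *
          ((Φ.map fun z => z ^ p ^ ℓ)ᵀ.mulVec y i)) =
        c * ∑ i, x i ^ p ^ ℓ * y i := by
  haveI := Fact.mk hp
  -- characteristic of F is p
  have hq : (ringChar F).Prime := CharP.char_is_prime F (ringChar F)
  have hdvd : ringChar F ∣ p ^ e := by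
    rw [← hcard]
    exact (CharP.cast_eq_zero_iff F (ringChar F) _).mp (Nat.cast_card_eq_zero F)
  have hqp : ringChar F = p :=
    (Nat.prime_dvd_prime_iff_eq hq hp).mp (hq.dvd_of_dvd_pow hdvd)
  haveI : CharP F p := hqp ▸ ringChar.charP F
  set f : F →+* F := iterateFrobenius F p ℓ with hf
  have hfdef : ∀ a : F, f a = a ^ p ^ ℓ := fun a => rfl
  -- right inverse of Φ
  choose v hv using hsurj
  set R : Matrix (Fin m) (Fin n) F := Matrix.of (fun j i => v (Pi.single i 1) j) with hR
  have hΦR : Φ * R = 1 := by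
    ext k i
    have := congrFun (hv (Pi.single i 1)) k
    simpa [Matrix.mul_apply, Matrix.mulVec, dotProduct, hR, Matrix.one_apply,
      Pi.single_apply, eq_comm] using this
  have hMf : (Φ.map fun x => x ^ p ^ ℓ) = Φ.map f := rfl
  have hA : Φ * (Φ.map f)ᵀ = c • (1 : Matrix (Fin n) (Fin n) F) := by
    have h1 : (Φ.map f) * (R.map f) = 1 := by
      rw [← Matrix.map_mul, hΦR, Matrix.map_one f (map_zero f) (map_one f)]
    have h2 : (R.map f)ᵀ * (Φ.map f)ᵀ = 1 := by
      rw [← Matrix.transpose_mul, h1, Matrix.transpose_one]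
    have := congrArg (fun M => (R.map f)ᵀ * M * R) hG
    simp only [pow_two, hMf] at this
    calc Φ * (Φ.map f)ᵀ
        = Φ * (Φ.map f)ᵀ * (Φ * R) := by rw [hΦR, Matrix.mul_one]
      _ = (R.map f)ᵀ * ((Φ.map f)ᵀ * Φ * ((Φ.map f)ᵀ * Φ)) * R := by
          simp only [← Matrix.mul_assoc]
          rw [h2, Matrix.one_mul]
      _ = (R.map f)ᵀ * (c • ((Φ.map f)ᵀ * Φ)) * R := by rw [this]
      _ = c • ((R.map f)ᵀ * (Φ.map f)ᵀ * Φ * R) := by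
          simp only [Matrix.mul_smul, Matrix.smul_mul, Matrix.mul_assoc]
      _ = c • (1 : Matrix (Fin n) (Fin n) F) := by
          rw [h2, Matrix.one_mul, hΦR]
  intro x y
  have hℓe : e - ℓ + ℓ = e := Nat.sub_add_cancel (le_trans hℓ (Nat.sub_le e 1))
  have key : ∀ i, ((Φ.map fun z => z ^ p ^ (e - ℓ))ᵀ.mulVec x i) ^ p ^ ℓ
      = (Φᵀ.mulVec fun j => x j ^ p ^ ℓ) i := by
    intro i
    have : ((Φ.map fun z => z ^ p ^ (e - ℓ))ᵀ.mulVec x i) ^ p ^ ℓ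
        = f ((Φ.map fun z => z ^ p ^ (e - ℓ))ᵀ.mulVec x i) := rfl
    rw [this]
    simp only [Matrix.mulVec, dotProduct, Matrix.transpose_apply, Matrix.map_apply,
      _root_.map_sum]
    refine Finset.sum_congr rfl fun j _ => ?_
    rw [hfdef, mul_pow, ← pow_mul, ← pow_add, hℓe, ← hcard, FiniteField.pow_card]
  calc (∑ i, ((Φ.map fun z => z ^ p ^ (e - ℓ))ᵀ.mulVec x i) ^ p ^ ℓ *
          ((Φ.map fun z => z ^ p ^ ℓ)ᵀ.mulVec y i))
      = (Φᵀ.mulVec fun j => x j ^ p ^ ℓ) ⬝ᵥ ((Φ.map f)ᵀ.mulVec y) := by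
        rw [dotProduct]
        exact Finset.sum_congr rfl fun i _ => by rw [key, hMf]
    _ = (fun j => x j ^ p ^ ℓ) ⬝ᵥ ((Φ * (Φ.map f)ᵀ).mulVec y) := by
        rw [← Matrix.mulVec_mulVec, Matrix.mulVec_transpose,
          ← Matrix.dotProduct_mulVec]
    _ = c * ∑ i, x i ^ p ^ ℓ * y i := by
        rw [hA, Matrix.smul_mulVec, Matrix.one_mulVec, dotProduct_smul,
          smul_eq_mul, dotProduct]
end

section
/- Let {φ_i}_{i=1}^m be an ℓ-Galois (a, 0, c)-equiangular tight frame for F^n, i.e., the n×m matrix Φ with columns φ_i satisfies: Φ is surjective, Φ·Φ^{†_ℓ} = c·I, (φ_i,φ_i)_ℓ = a for all i, and (φ_i,φ_j)_ℓ·(φ_j,φ_i)_ℓ = 0 for all i ≠ j. Then a = c or a = 0. -/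
open Matrix BigOperators

/-- If the columns `φ_1, …, φ_m` of `Φ` form an ℓ-Galois `(a, 0, c)`-equiangular tight
frame for `F^n` (spanning, `Φ·σ_ℓ(Φ)ᵀ = c·I`, `(φ_i,φ_i)_ℓ = a` for all `i`, and
`(φ_i,φ_j)_ℓ·(φ_j,φ_i)_ℓ = 0` for `i ≠ j`), then `a = c` or `a = 0`. -/
theorem etf_b_zero (p e ℓ n m : ℕ) (hp : p.Prime) (he : 1 ≤ e) (hℓ : ℓ ≤ e - 1)
    (hm : 1 ≤ m)
    (F : Type) [Field F] [Fintype F] (hcard : Fintype.card F = p ^ e)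
    (Φ : Matrix (Fin n) (Fin m) F) (a c : F)
    (hsurj : Function.Surjective Φ.mulVec)
    (htight : Φ * (Φ.map fun x => x ^ p ^ ℓ)ᵀ = c • (1 : Matrix (Fin n) (Fin n) F))
    (hdiag : ∀ i : Fin m, ∑ k, (Φ k i) ^ p ^ ℓ * Φ k i = a)
    (hoff : ∀ i j : Fin m, i ≠ j →
      (∑ k, (Φ k i) ^ p ^ ℓ * Φ k j) * (∑ k, (Φ k j) ^ p ^ ℓ * Φ k i) = 0) :
    a = c ∨ a = 0 := by
  set A := (Φ.map fun x => x ^ p ^ ℓ)ᵀ with hA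
  set G := A * Φ with hG
  have hGentry : ∀ i j : Fin m, G i j = ∑ k, (Φ k i) ^ p ^ ℓ * Φ k j := by
    intro i j
    simp [hG, hA, Matrix.mul_apply, Matrix.transpose_apply, Matrix.map_apply]
  have hG2 : G * G = c • G := by
    calc G * G = A * (Φ * A) * Φ := by
          simp [hG, Matrix.mul_assoc]
      _ = A * (c • (1 : Matrix (Fin n) (Fin n) F)) * Φ := by rw [htight]
      _ = c • G := by
          simp [hG, Matrix.mul_smul, Matrix.smul_mul, Matrix.mul_assoc]
  have i : Fin m := ⟨0, hm⟩
  have h1 := congrFun (congrFun hG2 i) i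
  have hLHS : (G * G) i i = a * a := by
    rw [Matrix.mul_apply]
    rw [Finset.sum_eq_single i]
    · rw [hGentry, hdiag]
    · intro j _ hji
      rw [hGentry, hGentry]
      exact hoff i j (Ne.symm hji)
    · intro h; exact absurd (Finset.mem_univ i) h
  have hRHS : (c • G) i i = c * a := by
    simp only [Matrix.smul_apply, smul_eq_mul]
    rw [hGentry, hdiag]
  have key : a * a = c * a := by rw [← hLHS, ← hRHS, h1]
  have : (a - c) * a = 0 := by ring_nf; linear_combination key
  rcases mul_eq_zero.mp this with h | h
  · left; exact sub_eq_zero.mp h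
  · right; exact h
end

section
/- Let M be an n×n matrix over F with M·M^{†_ℓ} = −I and M^{†_ℓ}·M = −I (equivalently, the columns of M form an ℓ-Galois (−1, 0, −1)-equiangular tight frame for F^n). Let C ⊆ F^{2n} be the row space of the n×2n block matrix G₀ = [I | M]. Then C is an ℓ-Galois self-dual code: C = C^{⊥_ℓ}. -/
open Matrix BigOperators

/-- If `M·M^{†_ℓ} = −I = M^{†_ℓ}·M` (the columns of `M` form an ℓ-Galois
`(−1,0,−1)`-ETF for `F^n`), then the row space `C` of `G₀ = [I | M]` is an ℓ-Galois
self-dual code: `C = C^{⊥_ℓ}`, where `⟨x,c⟩_ℓ = ∑ i, x_i·c_i^(p^ℓ)`. -/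
theorem etf_gives_self_dual (p e ℓ n : ℕ) (hp : p.Prime) (he : 1 ≤ e) (hℓ : ℓ ≤ e - 1)
    (F : Type) [Field F] [Fintype F] (hcard : Fintype.card F = p ^ e)
    (M : Matrix (Fin n) (Fin n) F)
    (h1 : M * (M.map fun x => x ^ p ^ ℓ)ᵀ = -1)
    (h2 : (M.map fun x => x ^ p ^ ℓ)ᵀ * M = -1)
    (C : Submodule F (Fin n ⊕ Fin n → F))
    (hC : C = Submodule.span F (Set.range fun i => Matrix.fromCols 1 M i)) :
    ∀ x : Fin n ⊕ Fin n → F, x ∈ C ↔ ∀ c ∈ C, ∑ i, x i * c i ^ p ^ ℓ = 0 := by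
  haveI hpf : Fact p.Prime := ⟨hp⟩
  -- characteristic of F is p
  haveI hchar : CharP F p := by
    obtain ⟨q, hqc⟩ := CharP.exists F
    haveI := hqc
    have hq : q.Prime := CharP.char_is_prime F q
    obtain ⟨m, hq', hcard'⟩ := FiniteField.card F q
    have hdvd : q ∣ p ^ e := by
      rw [← hcard, hcard']
      exact dvd_pow_self q m.pos.ne'
    have : q = p := ((Nat.prime_dvd_prime_iff_eq hq hp).mp (hq.dvd_of_dvd_pow hdvd))
    rwa [this] at hqc
  set q := p ^ ℓ with hq
  have hfadd : ∀ a b : F, (a + b) ^ q = a ^ q + b ^ q := fun a b => add_pow_char_pow a b p ℓ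
  have hq0 : q ≠ 0 := pow_ne_zero ℓ hp.pos.ne'
  -- generators
  set g : Fin n → (Fin n ⊕ Fin n → F) := fun i => Matrix.fromCols 1 M i with hg
  have hgl : ∀ i k, g i (Sum.inl k) = (1 : Matrix (Fin n) (Fin n) F) i k := fun i k => rfl
  have hgr : ∀ i k, g i (Sum.inr k) = M i k := fun i k => rfl
  -- key orthogonality of generators
  have key : ∀ i j, ∑ k, g i k * g j k ^ q = 0 := by
    intro i j
    rw [Fintype.sum_sum_type]
    have e1 : ∀ k, g i (Sum.inl k) * g j (Sum.inl k) ^ q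
        = (1 : Matrix (Fin n) (Fin n) F) i k * (1 : Matrix (Fin n) (Fin n) F) k j := by
      intro k
      rw [hgl, hgl, Matrix.one_apply (i := j)]
      by_cases h : j = k
      · subst h; simp [Matrix.one_apply]
      · simp [Matrix.one_apply, h, Ne.symm h, zero_pow hq0]
    have e2 : ∀ k, g i (Sum.inr k) * g j (Sum.inr k) ^ q
        = M i k * ((M.map fun x => x ^ q)ᵀ) k j := by
      intro k; rw [hgr, hgr]; rfl
    rw [Finset.sum_congr rfl fun k _ => e1 k, Finset.sum_congr rfl fun k _ => e2 k,
      ← Matrix.mul_apply, ← Matrix.mul_apply, h1, Matrix.one_mul]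
    simp [Matrix.one_apply]
  subst hC
  intro x
  constructor
  · intro hx c hc
    induction hx using Submodule.span_induction with
    | mem y hy =>
      obtain ⟨i, rfl⟩ := hy
      induction hc using Submodule.span_induction with
      | mem z hz => obtain ⟨j, rfl⟩ := hz; exact key i j
      | zero => simp [zero_pow hq0]
      | add z w hz hw ihz ihw =>
        simp only [Pi.add_apply, hfadd, mul_add, Finset.sum_add_distrib, ihz, ihw, add_zero]
      | smul a z hz ih =>
        have h' : ∀ k, g i k * (a • z) k ^ q = a ^ q * (g i k * z k ^ q) := by
          intro k; simp only [Pi.smul_apply, smul_eq_mul, mul_pow]; ring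
        rw [Finset.sum_congr rfl fun k _ => h' k, ← Finset.mul_sum, ih, mul_zero]
    | zero => simp
    | add y z hy hz ihy ihz =>
      simp only [Pi.add_apply, add_mul, Finset.sum_add_distrib, ihy, ihz, add_zero]
    | smul a y hy ih =>
      simp only [Pi.smul_apply, smul_eq_mul, mul_assoc, ← Finset.mul_sum, ih, mul_zero]
  · intro hx
    have hcond : ∀ j, x (Sum.inl j) + ∑ k, x (Sum.inr k) * M j k ^ q = 0 := by
      intro j
      have hthis := hx (g j) (Submodule.subset_span ⟨j, rfl⟩)
      rw [Fintype.sum_sum_type] at hthis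
      have e1 : ∑ k, x (Sum.inl k) * g j (Sum.inl k) ^ q = x (Sum.inl j) := by
        have h' : ∀ k, x (Sum.inl k) * g j (Sum.inl k) ^ q
            = if k = j then x (Sum.inl j) else 0 := by
          intro k
          rw [hgl, Matrix.one_apply]
          by_cases h : k = j
          · subst h; simp
          · rw [if_neg (Ne.symm h), zero_pow hq0, mul_zero, if_neg h]
        rw [Finset.sum_congr rfl fun k _ => h' k, Finset.sum_ite_eq' Finset.univ j,
          if_pos (Finset.mem_univ j)]
      rw [e1] at hthis
      exact hthis
    have hstep : ∀ j, x (Sum.inl j) = -∑ m, x (Sum.inr m) * M j m ^ q := fun j =>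
      eq_neg_of_add_eq_zero_left (hcond j)
    have hxeq : x = ∑ j, x (Sum.inl j) • g j := by
      funext k
      rw [Finset.sum_apply]
      simp only [Pi.smul_apply, smul_eq_mul]
      cases k with
      | inl k =>
        have h' : ∀ j, x (Sum.inl j) * g j (Sum.inl k)
            = if j = k then x (Sum.inl k) else 0 := by
          intro j
          rw [hgl, Matrix.one_apply]
          by_cases h : j = k
          · subst h; simp
          · rw [if_neg h, mul_zero, if_neg h]
        rw [Finset.sum_congr rfl fun j _ => h' j, Finset.sum_ite_eq' Finset.univ k,
          if_pos (Finset.mem_univ k)]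
      | inr k =>
        symm
        calc ∑ j, x (Sum.inl j) * g j (Sum.inr k)
            = ∑ j, (-∑ m, x (Sum.inr m) * M j m ^ q) * M j k :=
              Finset.sum_congr rfl fun j _ => by rw [hgr, hstep j]
          _ = -∑ j, ∑ m, x (Sum.inr m) * (M j m ^ q * M j k) := by
              simp [neg_mul, Finset.sum_mul, mul_assoc]
          _ = -∑ m, x (Sum.inr m) * ∑ j, M j m ^ q * M j k := by
              rw [Finset.sum_comm]
              simp [Finset.mul_sum]
          _ = -∑ m, x (Sum.inr m) * (((M.map fun y => y ^ q)ᵀ * M) m k) := by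
              simp [Matrix.mul_apply, Matrix.transpose_apply, Matrix.map_apply]
          _ = x (Sum.inr k) := by
              rw [h2]
              have h' : ∀ m, x (Sum.inr m) * ((-1 : Matrix (Fin n) (Fin n) F) m k)
                  = if m = k then -x (Sum.inr k) else 0 := by
                intro m
                rw [Matrix.neg_apply, Matrix.one_apply]
                by_cases h : m = k
                · subst h; simp
                · rw [if_neg h, neg_zero, mul_zero, if_neg h]
              rw [Finset.sum_congr rfl fun m _ => h' m, Finset.sum_ite_eq' Finset.univ k,
                if_pos (Finset.mem_univ k), neg_neg]
    rw [hxeq]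
    exact Submodule.sum_mem _ fun j _ =>
      Submodule.smul_mem _ _ (Submodule.subset_span ⟨j, rfl⟩)
end

section
/- Let a ∈ F with a ≠ 0 and a ≠ −1, and let M be an n×n matrix over F with M·M^{†_ℓ} = a·I and M^{†_ℓ}·M = a·I (equivalently, the columns of M form an ℓ-Galois (a, 0, a)-equiangular tight frame for F^n). Let C ⊆ F^{2n} be the row space of the n×2n block matrix G₀ = [I | M]. Then C is an ℓ-Galois LCD code: C ∩ C^{⊥_ℓ} = {0}. -/
open Matrix BigOperators

/-- If `a ≠ 0`, `a ≠ −1` and `M·M^{†_ℓ} = a·I = M^{†_ℓ}·M` (the columns of `M` form an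
ℓ-Galois `(a,0,a)`-ETF for `F^n`), then the row space `C` of `G₀ = [I | M]` is an
ℓ-Galois LCD code: `C ∩ C^{⊥_ℓ} = {0}`, where `⟨x,c⟩_ℓ = ∑ i, x_i·c_i^(p^ℓ)`. -/
theorem etf_gives_lcd (p e ℓ n : ℕ) (hp : p.Prime) (he : 1 ≤ e) (hℓ : ℓ ≤ e - 1)
    (F : Type) [Field F] [Fintype F] (hcard : Fintype.card F = p ^ e)
    (a : F) (ha0 : a ≠ 0) (ha1 : a ≠ -1)
    (M : Matrix (Fin n) (Fin n) F)
    (h1 : M * (M.map fun x => x ^ p ^ ℓ)ᵀ = a • (1 : Matrix (Fin n) (Fin n) F))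
    (h2 : (M.map fun x => x ^ p ^ ℓ)ᵀ * M = a • (1 : Matrix (Fin n) (Fin n) F))
    (C : Submodule F (Fin n ⊕ Fin n → F))
    (hC : C = Submodule.span F (Set.range fun i => Matrix.fromCols 1 M i)) :
    ∀ x : Fin n ⊕ Fin n → F, x ∈ C → (∀ c ∈ C, ∑ i, x i * c i ^ p ^ ℓ = 0) → x = 0 := by
  intro x hx horth
  subst hC
  rw [Submodule.mem_span_range_iff_exists_fun] at hx
  obtain ⟨v, hv⟩ := hx
  have hq : p ^ ℓ ≠ 0 := pow_ne_zero _ hp.pos.ne'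
  have hEntry : ∀ i k : Fin n,
      ∑ j : Fin n ⊕ Fin n, fromCols 1 M i j * fromCols 1 M k j ^ p ^ ℓ
        = if i = k then 1 + a else 0 := by
    intro i k
    have hM := congrFun (congrFun h1 i) k
    rw [mul_apply] at hM
    simp only [transpose_apply, map_apply, Matrix.smul_apply, one_apply, smul_eq_mul] at hM
    rw [Fintype.sum_sum_type]
    simp only [fromCols_apply_inl, fromCols_apply_inr]
    rw [hM]
    have : ∑ j : Fin n, (1 : Matrix (Fin n) (Fin n) F) i j * (1 : Matrix (Fin n) (Fin n) F) k j ^ p ^ ℓ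
        = if i = k then 1 else 0 := by
      simp only [one_apply, apply_ite (· ^ p ^ ℓ), one_pow, zero_pow hq, mul_ite, mul_one, mul_zero, ite_mul, zero_mul]
      simp [Finset.sum_ite_eq, eq_comm]
    rw [this]
    split <;> simp [*]
  have key : ∀ k, v k * (1 + a) = 0 := by
    intro k
    have h := horth (fromCols 1 M k) (Submodule.subset_span ⟨k, rfl⟩)
    rw [← hv] at h
    calc v k * (1 + a) = ∑ i, v i * (if i = k then 1 + a else 0) := by
          simp [Finset.sum_ite_eq, mul_ite]
      _ = ∑ i, v i * ∑ j : Fin n ⊕ Fin n, fromCols 1 M i j * fromCols 1 M k j ^ p ^ ℓ := by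
          simp_rw [hEntry]
      _ = ∑ i, ∑ j : Fin n ⊕ Fin n, v i * (fromCols 1 M i j * fromCols 1 M k j ^ p ^ ℓ) := by
          simp_rw [Finset.mul_sum]
      _ = ∑ j, (∑ i, v i • fromCols 1 M i) j * fromCols 1 M k j ^ p ^ ℓ := by
          rw [Finset.sum_comm]
          simp [Finset.sum_apply, Finset.sum_mul, mul_assoc]
      _ = 0 := h
  have h1a : (1 : F) + a ≠ 0 := by
    intro h
    exact ha1 (by linear_combination h)
  have hv0 : ∀ k, v k = 0 := fun k => by
    have := key k
    exact (mul_eq_zero.mp this).resolve_right h1a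
  rw [← hv]
  simp [hv0]
end

section
/- Let s, t ∈ F be nonzero, let J be the n×n all-ones matrix, and set M = s·I + t·J. If s·t^{p^ℓ} + t·s^{p^ℓ} + n·t^{p^ℓ+1} = 0 (where n denotes the image of the natural number n in F), then M·M^{†_ℓ} = s^{p^ℓ+1}·I. In particular, M^{†_ℓ}M is the ℓ-Galois Gram matrix of an (s^{p^ℓ+1}, 0, s^{p^ℓ+1})_ℓ-equiangular tight frame for F^n, and M·M^{†_ℓ} has rank n. -/
open Matrix BigOperators

/-- Case (iii): for nonzero `s, t ∈ F` and `M = s·I + t·J` (`J` the all-ones matrix),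
if `s·t^(p^ℓ) + t·s^(p^ℓ) + n·t^(p^ℓ+1) = 0` then `M·M^{†_ℓ} = s^(p^ℓ+1)·I`; in
particular `M^{†_ℓ}·M` is the ℓ-Galois Gram matrix of an
`(s^(p^ℓ+1), 0, s^(p^ℓ+1))_ℓ`-ETF for `F^n`, and `M·M^{†_ℓ}` has rank `n`. -/
theorem case_iii_etf (p e ℓ n : ℕ) (hp : p.Prime) (he : 1 ≤ e) (hℓ : ℓ ≤ e - 1)
    (F : Type) [Field F] [Fintype F] (hcard : Fintype.card F = p ^ e)
    (s t : F) (hs : s ≠ 0) (ht : t ≠ 0)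
    (M : Matrix (Fin n) (Fin n) F)
    (hM : M = s • (1 : Matrix (Fin n) (Fin n) F) + t • Matrix.of (fun _ _ => (1 : F)))
    (hcond : s * t ^ p ^ ℓ + t * s ^ p ^ ℓ + (n : F) * t ^ (p ^ ℓ + 1) = 0) :
    M * (M.map fun x => x ^ p ^ ℓ)ᵀ = s ^ (p ^ ℓ + 1) • (1 : Matrix (Fin n) (Fin n) F) ∧
    Function.Surjective M.mulVec ∧
    (∀ i, ((M.map fun x => x ^ p ^ ℓ)ᵀ * M) i i = s ^ (p ^ ℓ + 1)) ∧
    (∀ i j, i ≠ j →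
      ((M.map fun x => x ^ p ^ ℓ)ᵀ * M) i j * ((M.map fun x => x ^ p ^ ℓ)ᵀ * M) j i = 0) ∧
    (M * (M.map fun x => x ^ p ^ ℓ)ᵀ).rank = n := by
  haveI : Fact p.Prime := ⟨hp⟩
  -- establish CharP F p
  have hpdvd : p ∣ Fintype.card F := hcard ▸ dvd_pow_self p (by omega)
  have hdvdchar : p ∣ ringChar F := (prime_dvd_char_iff_dvd_card p).mpr hpdvd
  haveI : CharP F (ringChar F) := ringChar.charP F
  have hcharprime : (ringChar F).Prime := CharP.char_is_prime F (ringChar F)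
  have hpe : p = ringChar F :=
    ((Nat.prime_dvd_prime_iff_eq hp hcharprime).mp hdvdchar)
  haveI : CharP F p := hpe ▸ ringChar.charP F
  set q := p ^ ℓ with hq
  set J : Matrix (Fin n) (Fin n) F := Matrix.of (fun _ _ => (1 : F)) with hJ
  -- the mapped-transposed matrix
  have hN : (M.map fun x => x ^ q)ᵀ = s ^ q • (1 : Matrix (Fin n) (Fin n) F) + t ^ q • J := by
    ext i j
    simp only [transpose_apply, map_apply, hM, Matrix.add_apply, Matrix.smul_apply, one_apply, hJ,
      of_apply, smul_eq_mul, mul_one]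
    have hq0 : q ≠ 0 := pow_ne_zero ℓ hp.pos.ne'
    rw [add_pow_char_pow]
    by_cases h : i = j
    · subst h; simp [mul_pow, hq]
    · rw [if_neg h, if_neg (Ne.symm h), mul_zero, mul_zero, zero_pow hq0]
  have hJJ : J * J = (n : F) • J := by
    ext i j
    simp [hJ, Matrix.mul_apply, Matrix.smul_apply]
  have key : ∀ a b c d : F,
      (a • (1 : Matrix (Fin n) (Fin n) F) + b • J) * (c • 1 + d • J)
        = (a * c) • 1 + (a * d + b * c + (n : F) * (b * d)) • J := by
    intro a b c d
    rw [add_mul, mul_add, mul_add, smul_mul_smul_comm, smul_mul_smul_comm,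
      smul_mul_smul_comm, smul_mul_smul_comm, one_mul, mul_one, one_mul, hJJ,
      smul_smul]
    module
  have hqpow : ∀ x : F, x * x ^ q = x ^ (q + 1) := by
    intro x; rw [pow_succ']
  have hMN : M * (M.map fun x => x ^ q)ᵀ = s ^ (q + 1) • (1 : Matrix (Fin n) (Fin n) F) := by
    rw [hN, hM, key, hqpow]
    have : s * t ^ q + t * s ^ q + (n : F) * (t * t ^ q) = 0 := by
      rw [hqpow]; exact hcond
    rw [this, zero_smul, add_zero]
  have hNM : (M.map fun x => x ^ q)ᵀ * M = s ^ (q + 1) • (1 : Matrix (Fin n) (Fin n) F) := by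
    rw [hN, hM, key]
    have h1 : s ^ q * s = s ^ (q + 1) := by rw [mul_comm]; exact hqpow s
    have h2 : s ^ q * t + t ^ q * s + (n : F) * (t ^ q * t) = 0 := by
      linear_combination hcond - (n : F) * (pow_succ' t q)
    rw [h1, h2, zero_smul, add_zero]
  have hsq : s ^ (q + 1) ≠ 0 := pow_ne_zero _ hs
  refine ⟨hMN, ?_, ?_, ?_, ?_⟩
  · apply Matrix.mulVec_surjective_iff_exists_right_inverse.mpr
    exact ⟨(s ^ (q + 1))⁻¹ • (M.map fun x => x ^ q)ᵀ, by
      rw [Matrix.mul_smul, hMN, smul_smul, inv_mul_cancel₀ hsq, one_smul]⟩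
  · intro i; rw [hNM]; simp
  · intro i j hij; rw [hNM]; simp [Matrix.one_apply_ne hij]
  · rw [hMN]
    have hu : IsUnit (s ^ (q + 1) • (1 : Matrix (Fin n) (Fin n) F)) :=
      ⟨⟨_, (s ^ (q + 1))⁻¹ • (1 : Matrix (Fin n) (Fin n) F),
        by rw [smul_mul_smul_comm, one_mul, mul_inv_cancel₀ hsq, one_smul],
        by rw [smul_mul_smul_comm, one_mul, inv_mul_cancel₀ hsq, one_smul]⟩, rfl⟩
    rw [Matrix.rank_of_isUnit _ hu, Fintype.card_fin]
end

section
/- Let A be an n×n matrix over F with A·A^{†_ℓ} = −I (so [I | A] generates an ℓ-Galois self-dual code of length 2n). Let r, t ∈ F be nonzero, let J be the n×n all-ones matrix, and set M = r·A + t·J. Suppose there is θ ∈ F with Σ_{k=1}^n A_{ik} = θ for every row index i, and suppose r·t^{p^ℓ}·θ + t·r^{p^ℓ}·θ^{p^ℓ} + n·t^{p^ℓ+1} = 0 (where n denotes the image of the natural number n in F). Then M·M^{†_ℓ} = −r^{p^ℓ+1}·I. -/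
open Matrix BigOperators

/-- Case (iv): let `A·A^{†_ℓ} = −I` (so `[I | A]` generates an ℓ-Galois self-dual
code), let `r, t ≠ 0`, and `M = r·A + t·J`. If every row of `A` sums to `θ` and
`r·t^(p^ℓ)·θ + t·r^(p^ℓ)·θ^(p^ℓ) + n·t^(p^ℓ+1) = 0`, then
`M·M^{†_ℓ} = −r^(p^ℓ+1)·I`. -/
theorem case_iv_etf (p e ℓ n : ℕ) (hp : p.Prime) (he : 1 ≤ e) (hℓ : ℓ ≤ e - 1)
    (F : Type) [Field F] [Fintype F] (hcard : Fintype.card F = p ^ e)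
    (A : Matrix (Fin n) (Fin n) F)
    (hA : A * (A.map fun x => x ^ p ^ ℓ)ᵀ = -1)
    (r t : F) (hr : r ≠ 0) (ht : t ≠ 0)
    (M : Matrix (Fin n) (Fin n) F)
    (hM : M = r • A + t • Matrix.of (fun _ _ => (1 : F)))
    (θ : F) (hθ : ∀ i, ∑ k, A i k = θ)
    (hcond : r * t ^ p ^ ℓ * θ + t * r ^ p ^ ℓ * θ ^ p ^ ℓ + (n : F) * t ^ (p ^ ℓ + 1) = 0) :
    M * (M.map fun x => x ^ p ^ ℓ)ᵀ = (-(r ^ (p ^ ℓ + 1))) • (1 : Matrix (Fin n) (Fin n) F) := by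
  -- char F = p
  haveI := Fact.mk hp
  haveI : CharP F p := by
    obtain ⟨m, hcp, hc⟩ := FiniteField.card F (ringChar F)
    have hdvd : p ∣ ringChar F := by
      have : p ∣ ringChar F ^ (m : ℕ) := by
        rw [← hc, hcard]
        exact dvd_pow_self p (by omega)
      exact (Nat.Prime.dvd_of_dvd_pow hp this)
    have : ringChar F = p := ((Nat.prime_dvd_prime_iff_eq hp hcp).mp hdvd).symm
    exact this ▸ ringChar.charP F
  set q := p ^ ℓ with hq
  have hfrob : ∀ x y : F, (x + y) ^ q = x ^ q + y ^ q := fun x y => add_pow_char_pow x y p ℓ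
  have hmul : ∀ x y : F, (x * y) ^ q = x ^ q * y ^ q := fun x y => mul_pow x y q
  ext i j
  have hAA := congrFun (congrFun hA i) j
  simp only [mul_apply, transpose_apply, map_apply] at hAA ⊢
  have hMe : ∀ a b, M a b = r * A a b + t := by
    intro a b; rw [hM]; simp
  have key : ∀ k, M i k * M j k ^ q
      = r ^ (q+1) * (A i k * A j k ^ q) + (r * t ^ q) * A i k
        + (t * r ^ q) * A j k ^ q + t ^ (q+1) := by
    intro k
    rw [hMe, hMe, hfrob, hmul]
    ring
  have hsumq : ∑ k, A j k ^ q = θ ^ q := by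
    rw [← sum_pow_char_pow, hθ]
  simp only [key, Finset.sum_add_distrib, ← Finset.mul_sum, hθ i, hsumq,
    Finset.sum_const, Finset.card_univ, Fintype.card_fin, nsmul_eq_mul]
  rw [hAA]
  simp only [Matrix.neg_apply, one_apply, Matrix.smul_apply, one_apply]
  by_cases hij : i = j <;> simp [hij] <;> ring_nf <;> ring_nf at hcond <;> linear_combination hcond
end

section
/- Let A be an n×n matrix over F with A·A^{†_ℓ} = −I (so [I | A] generates an ℓ-Galois self-dual code of length 2n). Let r, s ∈ F be nonzero and set M = r·A + s·I and G = M·M^{†_ℓ}. Suppose there is α ∈ F such that r·s^{p^ℓ}·A_{ii} + s·r^{p^ℓ}·A_{ii}^{p^ℓ} = α for every i, suppose (r·s^{p^ℓ}·A_{ij} + s·r^{p^ℓ}·A_{ji}^{p^ℓ})·(r·s^{p^ℓ}·A_{ji} + s·r^{p^ℓ}·A_{ij}^{p^ℓ}) = 0 for all i ≠ j, and suppose a := s^{p^ℓ+1} − r^{p^ℓ+1} + α is nonzero. Then G_{ii} = a for every i and G_{ij}·G_{ji} = 0 for all i ≠ j; that is, G has the diagonal and equiangularity structure of the ℓ-Galois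 Gram matrix of an (a, 0, a)_ℓ-equiangular tight frame for F^n. -/
open Matrix BigOperators

/-- Case (v): let `A·A^{†_ℓ} = −I`, let `r, s ≠ 0`, `M = r·A + s·I` and
`G = M·M^{†_ℓ}`. If `r·s^(p^ℓ)·A_{ii} + s·r^(p^ℓ)·A_{ii}^(p^ℓ) = α` for all `i`,
`(r·s^(p^ℓ)·A_{ij} + s·r^(p^ℓ)·A_{ji}^(p^ℓ))·(r·s^(p^ℓ)·A_{ji} + s·r^(p^ℓ)·A_{ij}^(p^ℓ)) = 0`
for all `i ≠ j`, and `a := s^(p^ℓ+1) − r^(p^ℓ+1) + α ≠ 0`, then `G_{ii} = a` for all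
`i` and `G_{ij}·G_{ji} = 0` for all `i ≠ j`. -/
theorem case_v_etf (p e ℓ n : ℕ) (hp : p.Prime) (he : 1 ≤ e) (hℓ : ℓ ≤ e - 1)
    (F : Type) [Field F] [Fintype F] (hcard : Fintype.card F = p ^ e)
    (A : Matrix (Fin n) (Fin n) F)
    (hA : A * (A.map fun x => x ^ p ^ ℓ)ᵀ = -1)
    (r s : F) (hr : r ≠ 0) (hs : s ≠ 0)
    (M G : Matrix (Fin n) (Fin n) F)
    (hM : M = r • A + s • (1 : Matrix (Fin n) (Fin n) F))
    (hG : G = M * (M.map fun x => x ^ p ^ ℓ)ᵀ)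
    (α : F)
    (hα : ∀ i, r * s ^ p ^ ℓ * A i i + s * r ^ p ^ ℓ * (A i i) ^ p ^ ℓ = α)
    (hoff : ∀ i j, i ≠ j →
      (r * s ^ p ^ ℓ * A i j + s * r ^ p ^ ℓ * (A j i) ^ p ^ ℓ) *
        (r * s ^ p ^ ℓ * A j i + s * r ^ p ^ ℓ * (A i j) ^ p ^ ℓ) = 0)
    (a : F) (haval : a = s ^ (p ^ ℓ + 1) - r ^ (p ^ ℓ + 1) + α) (ha : a ≠ 0) :
    (∀ i, G i i = a) ∧ ∀ i j, i ≠ j → G i j * G j i = 0 := by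
  -- characteristic p
  have hchar : CharP F p := by
    have h1 : CharP F (ringChar F) := ringChar.charP F
    have hprime : (ringChar F).Prime := CharP.char_is_prime F (ringChar F)
    have hdvd : ringChar F ∣ p ^ e := by
      rw [← CharP.cast_eq_zero_iff F (ringChar F), ← hcard, Nat.cast_card_eq_zero]
    have : ringChar F = p := ((Nat.prime_dvd_prime_iff_eq hprime hp).mp
      (hprime.dvd_of_dvd_pow hdvd))
    rwa [this] at h1
  have hadd : ∀ x y : F, (x + y) ^ p ^ ℓ = x ^ p ^ ℓ + y ^ p ^ ℓ := by
    intro x y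
    haveI : Fact p.Prime := ⟨hp⟩
    haveI := hchar
    exact add_pow_char_pow x y p ℓ
  -- map of M
  have hmap : (M.map fun x => x ^ p ^ ℓ)
      = r ^ p ^ ℓ • (A.map fun x => x ^ p ^ ℓ) + s ^ p ^ ℓ • 1 := by
    ext i j
    simp only [hM, Matrix.map_apply, Matrix.add_apply, Matrix.smul_apply,
      Matrix.one_apply, smul_eq_mul]
    rcases eq_or_ne i j with h | h
    · simp [h, hadd, mul_pow]
    · simp [h, mul_pow]
  have hGeq : G = (s ^ (p ^ ℓ + 1) - r ^ (p ^ ℓ + 1)) • (1 : Matrix (Fin n) (Fin n) F)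
      + (r * s ^ p ^ ℓ) • A + (s * r ^ p ^ ℓ) • (A.map fun x => x ^ p ^ ℓ)ᵀ := by
    rw [hG, hmap, hM, Matrix.transpose_add, Matrix.transpose_smul, Matrix.transpose_smul,
      Matrix.transpose_one]
    rw [add_mul, mul_add, mul_add, smul_mul_assoc, smul_mul_assoc, smul_mul_assoc,
      smul_mul_assoc, Matrix.mul_smul, Matrix.mul_smul, Matrix.mul_smul, Matrix.mul_smul,
      hA, Matrix.one_mul, Matrix.mul_one, Matrix.mul_one]
    ext i j
    simp only [Matrix.add_apply, Matrix.smul_apply, Matrix.neg_apply, Matrix.one_apply,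
      smul_eq_mul, Matrix.transpose_apply, Matrix.map_apply]
    rcases eq_or_ne i j with h | h <;> simp [h] <;> try ring
  have hentry : ∀ i j, G i j = (if i = j then s ^ (p ^ ℓ + 1) - r ^ (p ^ ℓ + 1) else 0)
      + r * s ^ p ^ ℓ * A i j + s * r ^ p ^ ℓ * (A j i) ^ p ^ ℓ := by
    intro i j
    rw [hGeq]
    simp only [Matrix.add_apply, Matrix.smul_apply, Matrix.one_apply, Matrix.transpose_apply,
      Matrix.map_apply, smul_eq_mul]
    split <;> ring
  constructor
  · intro i
    rw [hentry i i, if_pos rfl, haval, add_assoc, hα i]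
  · intro i j hij
    rw [hentry i j, hentry j i, if_neg hij, if_neg (Ne.symm hij), zero_add, zero_add]
    exact hoff i j hij
end

section
/- Let A be an n×n matrix over F with A·A^{†_ℓ} = −I (so [I | A] generates an ℓ-Galois self-dual code of length 2n). Let r, s, t ∈ F all be nonzero, let J be the n×n all-ones matrix, set M = r·A + s·I + t·J and G = M·M^{†_ℓ}, and for each i write ρ_i := Σ_{k=1}^n A_{ik}. Suppose there is δ ∈ F such that r·s^{p^ℓ}·A_{ii} + s·r^{p^ℓ}·A_{ii}^{p^ℓ} + r·t^{p^ℓ}·ρ_i + t·r^{p^ℓ}·ρ_i^{p^ℓ} = δ for every i; suppose a := s^{p^ℓ+1} − r^{p^ℓ+1} + s·t^{p^ℓ} + t·s^{p^ℓ} + n·t^{p^ℓ+1} + δ is nonzero (where n denotes the image of the natural number n in F); and suppose that for all i ≠ j, r·s^{p^ℓ}·A_{ij} + s·r^{p^ℓ}·A_{ji}^{p^ℓ} + r·t^{p^ℓ}·ρ_i + t·r^{p^ℓ}·ρ_j^{p^ℓ} + s·t^{p^ℓ} + t·s^{p^ℓ} + n·t^{p^ℓ+1} = 0 or r·s^{p^ℓ}·A_{ji}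 + s·r^{p^ℓ}·A_{ij}^{p^ℓ} + r·t^{p^ℓ}·ρ_j + t·r^{p^ℓ}·ρ_i^{p^ℓ} + s·t^{p^ℓ} + t·s^{p^ℓ} + n·t^{p^ℓ+1} = 0. Then G_{ii} = a for every i and G_{ij}·G_{ji} = 0 for all i ≠ j; that is, G has the diagonal and equiangularity structure of the ℓ-Galois Gram matrix of an (a, 0, a)_ℓ-equiangular tight frame for F^n. -/
open Matrix BigOperators

/-- Case (vi): let `A·A^{†_ℓ} = −I`, let `r, s, t` all be nonzero,
`M = r·A + s·I + t·J`, `G = M·M^{†_ℓ}` and `ρ_i = ∑ k, A_{ik}`. Under the stated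
conditions on `δ`, `a` and the off-diagonal entries, `G_{ii} = a` for all `i` and
`G_{ij}·G_{ji} = 0` for all `i ≠ j`. -/
theorem case_vi_etf (p e ℓ n : ℕ) (hp : p.Prime) (he : 1 ≤ e) (hℓ : ℓ ≤ e - 1)
    (F : Type) [Field F] [Fintype F] (hcard : Fintype.card F = p ^ e)
    (A : Matrix (Fin n) (Fin n) F)
    (hA : A * (A.map fun x => x ^ p ^ ℓ)ᵀ = -1)
    (r s t : F) (hr : r ≠ 0) (hs : s ≠ 0) (ht : t ≠ 0)
    (M G : Matrix (Fin n) (Fin n) F)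
    (hM : M = r • A + s • (1 : Matrix (Fin n) (Fin n) F) + t • Matrix.of (fun _ _ => (1 : F)))
    (hG : G = M * (M.map fun x => x ^ p ^ ℓ)ᵀ)
    (ρ : Fin n → F) (hρ : ∀ i, ρ i = ∑ k, A i k)
    (δ : F)
    (hδ : ∀ i, r * s ^ p ^ ℓ * A i i + s * r ^ p ^ ℓ * (A i i) ^ p ^ ℓ +
      r * t ^ p ^ ℓ * ρ i + t * r ^ p ^ ℓ * (ρ i) ^ p ^ ℓ = δ)
    (a : F)
    (haval : a = s ^ (p ^ ℓ + 1) - r ^ (p ^ ℓ + 1) + s * t ^ p ^ ℓ + t * s ^ p ^ ℓ +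
      (n : F) * t ^ (p ^ ℓ + 1) + δ)
    (ha : a ≠ 0)
    (hoff : ∀ i j, i ≠ j →
      r * s ^ p ^ ℓ * A i j + s * r ^ p ^ ℓ * (A j i) ^ p ^ ℓ +
          r * t ^ p ^ ℓ * ρ i + t * r ^ p ^ ℓ * (ρ j) ^ p ^ ℓ +
          s * t ^ p ^ ℓ + t * s ^ p ^ ℓ + (n : F) * t ^ (p ^ ℓ + 1) = 0 ∨
      r * s ^ p ^ ℓ * A j i + s * r ^ p ^ ℓ * (A i j) ^ p ^ ℓ +
          r * t ^ p ^ ℓ * ρ j + t * r ^ p ^ ℓ * (ρ i) ^ p ^ ℓ +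
          s * t ^ p ^ ℓ + t * s ^ p ^ ℓ + (n : F) * t ^ (p ^ ℓ + 1) = 0) :
    (∀ i, G i i = a) ∧ ∀ i j, i ≠ j → G i j * G j i = 0 := by

  haveI : Fact p.Prime := ⟨hp⟩
  have hdvd : p ∣ ringChar F := (prime_dvd_char_iff_dvd_card p).mpr
    (hcard ▸ dvd_pow_self p (by omega))
  have hrc : (ringChar F).Prime := CharP.char_is_prime F (ringChar F)
  have hpc : ringChar F = p := ((Nat.prime_dvd_prime_iff_eq hp hrc).mp hdvd).symm
  haveI hchar : CharP F p := hpc ▸ ringChar.charP F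
  set q := p ^ ℓ with hqdef
  have hfrob : ∀ x y : F, (x + y) ^ q = x ^ q + y ^ q := fun x y => add_pow_char_pow ..
  have honepow : ∀ i j : Fin n, ((1 : Matrix (Fin n) (Fin n) F) i j) ^ q = (1 : Matrix (Fin n) (Fin n) F) i j := by
    intro i j
    have hq0 : q ≠ 0 := pow_ne_zero _ hp.ne_zero
    by_cases h : i = j <;> simp [Matrix.one_apply, h, zero_pow hq0]
  have hsum : ∀ j, (ρ j) ^ q = ∑ k, (A j k) ^ q := by
    intro j
    rw [hρ, sum_pow_char_pow]
  have key : ∀ i j, G i j =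
      (if i = j then s ^ (q + 1) - r ^ (q + 1) else 0) +
      (r * s ^ q * A i j + s * r ^ q * (A j i) ^ q + r * t ^ q * ρ i +
        t * r ^ q * (ρ j) ^ q + s * t ^ q + t * s ^ q + (n : F) * t ^ (q + 1)) := by
    intro i j
    have hAij : ∑ k, A i k * (A j k) ^ q = -(if i = j then (1 : F) else 0) := by
      have := congrFun (congrFun hA i) j
      simpa [Matrix.mul_apply, Matrix.one_apply] using this
    have step1 : G i j = ∑ k, (r * A i k + s * (1 : Matrix (Fin n) (Fin n) F) i k + t) *
        (r ^ q * (A j k) ^ q + s ^ q * (1 : Matrix (Fin n) (Fin n) F) j k + t ^ q) := by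
      rw [hG, hM]
      rw [Matrix.mul_apply]
      apply Finset.sum_congr rfl
      intro k _
      simp only [Matrix.transpose_apply, Matrix.map_apply, Matrix.add_apply,
        Matrix.smul_apply, Matrix.of_apply, smul_eq_mul, mul_one]
      rw [hfrob, hfrob, mul_pow, mul_pow, honepow]
    rw [step1]
    have expand : ∀ k, (r * A i k + s * (1 : Matrix (Fin n) (Fin n) F) i k + t) *
        (r ^ q * (A j k) ^ q + s ^ q * (1 : Matrix (Fin n) (Fin n) F) j k + t ^ q)
      = (r * r ^ q) * (A i k * (A j k) ^ q)
        + (r * s ^ q) * (A i k * (1 : Matrix (Fin n) (Fin n) F) j k)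
        + (r * t ^ q) * A i k
        + (s * r ^ q) * ((1 : Matrix (Fin n) (Fin n) F) i k * (A j k) ^ q)
        + (s * s ^ q) * ((1 : Matrix (Fin n) (Fin n) F) i k * (1 : Matrix (Fin n) (Fin n) F) j k)
        + (s * t ^ q) * (1 : Matrix (Fin n) (Fin n) F) i k
        + (t * r ^ q) * (A j k) ^ q
        + (t * s ^ q) * (1 : Matrix (Fin n) (Fin n) F) j k
        + t * t ^ q := by intro k; ring
    simp only [expand]
    simp only [Finset.sum_add_distrib, ← Finset.mul_sum, hAij]
    have e1 : ∑ k, A i k * (1 : Matrix (Fin n) (Fin n) F) j k = A i j := by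
      simp [Matrix.one_apply, Finset.sum_ite_eq, eq_comm]
    have e2 : ∑ k, (1 : Matrix (Fin n) (Fin n) F) i k * (A j k) ^ q = (A j i) ^ q := by
      simp [Matrix.one_apply, Finset.sum_ite_eq]
    have e3 : ∑ k, (1 : Matrix (Fin n) (Fin n) F) i k * (1 : Matrix (Fin n) (Fin n) F) j k
        = if i = j then (1 : F) else 0 := by
      by_cases h : i = j <;> simp [Matrix.one_apply, h, Finset.sum_ite_eq, eq_comm]
    have e4 : ∑ _k : Fin n, (1 : F) = (n : F) := by simp
    have e5 : ∑ k, (1 : Matrix (Fin n) (Fin n) F) i k = (1 : F) := by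
      simp [Matrix.one_apply]
    have e6 : ∑ k, (1 : Matrix (Fin n) (Fin n) F) j k = (1 : F) := by
      simp [Matrix.one_apply]
    rw [e1, e2, e3, e5, e6, ← hsum j, ← hρ i]
    simp only [Finset.sum_const, Finset.card_univ, Fintype.card_fin, nsmul_eq_mul]
    simp only [pow_succ]
    by_cases h : i = j <;> simp only [h, if_true, if_false] <;> ring
  constructor
  · intro i
    have h := key i i
    rw [if_pos rfl] at h
    rw [h, haval]
    linear_combination hδ i
  · intro i j hij
    have hi := key i j
    have hj := key j i
    rw [if_neg hij, zero_add] at hi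
    rw [if_neg (Ne.symm hij), zero_add] at hj
    rcases hoff i j hij with h | h
    · rw [hi, h, zero_mul]
    · rw [hj, h, mul_zero]
end
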